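/- Height derivative identity: let u be a local minimizer of the functional 𝓕 on a ball B containing the closed unit ball, satisfying Assumption A. Then for every r ∈ (0,1) one has H'(r) − ((d−1)/r) H(r) − (2/r) B(r) = 0. -/

import Mathlib

open MeasureTheory Metric Filter Set
open scoped ENNReal Topology NNReal

noncomputable section


abbrev Euc (d : ℕ) : Type := EuclideanSpace ℝ (Fin d)

/-- The `C^{0,α}` norm of `f` on `s` is bounded by `M`
(sup norm plus `α`-Hölder seminorm bound). -/
def C0NormLe {d : ℕ} {F : Type} [NormedAddCommGroup F] (α : ℝ) (s : Set (Euc d))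
    (f : Euc d → F) (M : ℝ) : Prop :=
  (∀ x ∈ s, ‖f x‖ ≤ M) ∧ ∀ x ∈ s, ∀ y ∈ s, ‖f x - f y‖ ≤ M * ‖x - y‖ ^ α

/-- The `C^{1,α}` norm of `u` on `s` is bounded by `M`. -/
def C1NormLe {d : ℕ} (α : ℝ) (s : Set (Euc d)) (u : Euc d → ℝ) (M : ℝ) : Prop :=
  (∀ x ∈ s, DifferentiableAt ℝ u x) ∧ (∀ x ∈ s, |u x| ≤ M) ∧
    (∀ x ∈ s, ‖gradient u x‖ ≤ M) ∧
    ∀ x ∈ s, ∀ y ∈ s, ‖gradient u x - gradient u y‖ ≤ M * ‖x - y‖ ^ α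

/-- Hypotheses (H1)-(H3) on the nonlinearity `F(x, s, p)`: there are constants `γ, C > 0`
and a neighborhood `U` of the origin on which `F` is Lipschitz in `x` and satisfies the
stated bounds for `F`, `∇ₓF`, `∇ₚF` and `s ∂ₛF`. -/
structure NLHyp (d : ℕ) (F : Euc d → ℝ → Euc d → ℝ) (γ C : ℝ)
    (U : Set (Euc d × ℝ × Euc d)) : Prop where
  gamma_pos : 0 < γ
  C_pos : 0 < C
  U_nhds : U ∈ 𝓝 (0 : Euc d × ℝ × Euc d)
  lip_x : ∃ K : ℝ≥0, ∀ s p, LipschitzOnWith K (fun x => F x s p) {x | (x, s, p) ∈ U}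
  h1 : ∀ x s p, (x, s, p) ∈ U → DifferentiableAt ℝ (fun y => F y s p) x ∧
    |F x s p| + ‖gradient (fun y => F y s p) x‖ ≤ C * (‖p‖ ^ (2 + γ) + |s| ^ 2)
  h2 : ∀ x s p, (x, s, p) ∈ U → DifferentiableAt ℝ (fun w => F x s w) p ∧
    ‖gradient (fun w => F x s w) p‖ ≤ C * (‖p‖ ^ (1 + γ) + |s| ^ (1 + γ))
  h3 : ∀ x s p, (x, s, p) ∈ U →
    DifferentiableAt ℝ (fun t : ℝ => F x (s * (1 + t)) p) 0 ∧
    |deriv (fun t : ℝ => F x (s * (1 + t)) p) 0| ≤ C * (‖p‖ ^ (2 + γ) + |s| ^ 2)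

/-- `u ∈ W^{1,q}(B)`: `u` and its gradient are in `L^q(B)`. -/
def MemW1 {d : ℕ} (q : ℝ) (B : Set (Euc d)) (u : Euc d → ℝ) : Prop :=
  MemLp u (ENNReal.ofReal q) (volume.restrict B) ∧
    MemLp (gradient u) (ENNReal.ofReal q) (volume.restrict B)

/-- `u` is a local minimizer of `φ ↦ ∫_B L (x, φ x, ∇φ x)` among `W^{1,q}(B)` competitors
that differ from `u` on a compact subset of `B`. -/
def IsMinimizer {d : ℕ} (B : Set (Euc d)) (q : ℝ) (L : Euc d → ℝ → Euc d → ℝ)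
    (u : Euc d → ℝ) : Prop :=
  MemW1 q B u ∧ ∀ v : Euc d → ℝ, MemW1 q B v → HasCompactSupport (v - u) →
    tsupport (v - u) ⊆ B →
    ∫ x in B, L x (u x) (gradient u x) ≤ ∫ x in B, L x (v x) (gradient v x)

/-- Assumption A: `‖u‖_{C^{1,α}(B)} ≤ δ` for some `δ ∈ (0, δ₀)`, and linear
`C^{0,α}`–`L²` estimates for `u` and `∇u` on all balls contained in `B`. -/
def AssumptionA {d : ℕ} (B : Set (Euc d)) (u : Euc d → ℝ) (α δ₀ : ℝ) : Prop :=
  0 < α ∧ α < 1 ∧ 0 < δ₀ ∧ δ₀ < 1 ∧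
    (∃ δ, 0 < δ ∧ δ < δ₀ ∧ C1NormLe α B u δ) ∧
    ∃ C > (0 : ℝ), ∀ (x : Euc d) (r : ℝ), 0 < r → ball x r ⊆ B →
      C0NormLe α (ball x (r / 2)) u (C * ⨍ y in ball x r, (u y) ^ 2) ∧
      C0NormLe α (ball x (r / 2)) (gradient u) (C / r * ⨍ y in ball x r, (u y) ^ 2)

/-- The cutoff function `φ`: equal to `1` on `(0, 1-υ]`, affine on `(1-υ, 1]`,
and `0` on `(1, ∞)`. -/
def cutoff (υ : ℝ) (t : ℝ) : ℝ :=
  if t ≤ 1 - υ then 1 else if t ≤ 1 then (1 - t) / (1 - υ) else 0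

/-- The height function `H(r) = -∫ φ'(|x|/r) u(x)²/|x| dx`. -/
def Hh {d : ℕ} (υ : ℝ) (u : Euc d → ℝ) (r : ℝ) : ℝ :=
  -(∫ x : Euc d, deriv (cutoff υ) (‖x‖ / r) * (u x) ^ 2 / ‖x‖)

/-- The energy `D₀(r) = ∫ φ(|x|/r) |∇u|² dx`. -/
def D0 {d : ℕ} (υ : ℝ) (u : Euc d → ℝ) (r : ℝ) : ℝ :=
  ∫ x : Euc d, cutoff υ (‖x‖ / r) * ‖gradient u x‖ ^ 2

/-- The lower-order energy `D_l(r) = ∫ φ(|x|/r) u ∂ₛF(x, u, ∇u) dx`, where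
`u ∂ₛF(x, u, ∇u)` is the derivative at `t = 0` of `t ↦ F(x, u(1+t), ∇u)`. -/
def Dl {d : ℕ} (υ : ℝ) (F : Euc d → ℝ → Euc d → ℝ) (u : Euc d → ℝ) (r : ℝ) : ℝ :=
  ∫ x : Euc d, cutoff υ (‖x‖ / r) *
    deriv (fun t : ℝ => F x (u x * (1 + t)) (gradient u x)) 0

/-- The full energy `D(r) = D₀(r) + D_l(r)`. -/
def Dd {d : ℕ} (υ : ℝ) (F : Euc d → ℝ → Euc d → ℝ) (u : Euc d → ℝ) (r : ℝ) : ℝ :=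
  D0 υ u r + Dl υ F u r

/-- `A(r) = -∫ φ'(|x|/r) |x| (∇u · x/|x|)² dx`. -/
def Aa {d : ℕ} (υ : ℝ) (u : Euc d → ℝ) (r : ℝ) : ℝ :=
  -(∫ x : Euc d, deriv (cutoff υ) (‖x‖ / r) * ‖x‖ *
      ((inner ℝ (gradient u x) x : ℝ) / ‖x‖) ^ 2)

/-- `B(r) = -∫ φ'(|x|/r) u (∇u · x/|x|) dx`. -/
def Bb {d : ℕ} (υ : ℝ) (u : Euc d → ℝ) (r : ℝ) : ℝ :=
  -(∫ x : Euc d, deriv (cutoff υ) (‖x‖ / r) * u x *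
      ((inner ℝ (gradient u x) x : ℝ) / ‖x‖))

/-- `G(r) = ∫ φ(|x|/r) u² dx`. -/
def Gg {d : ℕ} (υ : ℝ) (u : Euc d → ℝ) (r : ℝ) : ℝ :=
  ∫ x : Euc d, cutoff υ (‖x‖ / r) * (u x) ^ 2

/-- The Almgren-type frequency `N(r) = r D(r) / H(r)`. -/
def Nfreq {d : ℕ} (υ : ℝ) (F : Euc d → ℝ → Euc d → ℝ) (u : Euc d → ℝ) (r : ℝ) : ℝ :=
  r * Dd υ F u r / Hh υ u r





variable {υ : ℝ} (hυ : υ ∈ Set.Ioo (1 / 2 : ℝ) 1)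

lemma cutoff_eq_one {t : ℝ} (h : t ≤ 1 - υ) : cutoff υ t = 1 := if_pos h

lemma cutoff_eq_zero (hυ : υ ∈ Set.Ioo (1 / 2 : ℝ) 1) {t : ℝ} (h : 1 ≤ t) : cutoff υ t = 0 := by
  unfold cutoff
  rcases lt_or_eq_of_le h with h1 | h1
  · rw [if_neg (by linarith [hυ.1]), if_neg (by linarith)]
  · rw [if_neg (by nlinarith [hυ.1]), if_pos (by linarith), ← h1]
    simp

lemma deriv_cutoff_of_lt (hυ : υ ∈ Set.Ioo (1 / 2 : ℝ) 1) {t : ℝ} (h : t < 1 - υ) :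
    deriv (cutoff υ) t = 0 := by
  have : cutoff υ =ᶠ[𝓝 t] fun _ => (1 : ℝ) := by
    filter_upwards [Iio_mem_nhds h] with s hs
    exact cutoff_eq_one (le_of_lt hs)
  rw [this.deriv_eq, deriv_const]

lemma deriv_cutoff_of_gt (hυ : υ ∈ Set.Ioo (1 / 2 : ℝ) 1) {t : ℝ} (h : 1 < t) :
    deriv (cutoff υ) t = 0 := by
  have : cutoff υ =ᶠ[𝓝 t] fun _ => (0 : ℝ) := by
    filter_upwards [Ioi_mem_nhds h] with s hs
    exact cutoff_eq_zero hυ (le_of_lt hs)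
  rw [this.deriv_eq, deriv_const]

lemma deriv_cutoff_bound (hυ : υ ∈ Set.Ioo (1 / 2 : ℝ) 1) (t : ℝ) :
    |deriv (cutoff υ) t| ≤ 1 / (1 - υ) := by
  have h1υ : (0:ℝ) < 1 - υ := by linarith [hυ.2]
  have hnn : (0:ℝ) ≤ 1 / (1 - υ) := div_nonneg zero_le_one h1υ.le
  rcases lt_trichotomy t (1 - υ) with h | h | h
  · rw [deriv_cutoff_of_lt hυ h]; rw [abs_zero]; exact hnn
  · subst h
    by_cases hdiff : DifferentiableAt ℝ (cutoff υ) (1 - υ)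
    · have h1 : HasDerivWithinAt (cutoff υ) 0 (Iic (1 - υ)) (1 - υ) :=
        (hasDerivWithinAt_const (1 - υ) (Iic (1 - υ)) (1:ℝ)).congr
          (fun y hy => cutoff_eq_one hy) (cutoff_eq_one le_rfl)
      have h2 := hdiff.hasDerivAt.hasDerivWithinAt (s := Iic (1 - υ))
      have := h1.derivWithin (uniqueDiffOn_Iic _ _ (Set.mem_Iic.2 le_rfl))
      have h3 := h2.derivWithin (uniqueDiffOn_Iic _ _ (Set.mem_Iic.2 le_rfl))
      rw [← h3, this]; rw [abs_zero]; exact hnn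
    · rw [deriv_zero_of_not_differentiableAt hdiff]; rw [abs_zero]; exact hnn
  · rcases lt_trichotomy t 1 with h2 | h2 | h2
    · have : cutoff υ =ᶠ[𝓝 t] fun s => (1 - s) / (1 - υ) := by
        filter_upwards [Ioo_mem_nhds h h2] with s hs
        unfold cutoff
        rw [if_neg (by linarith [hs.1]), if_pos (le_of_lt hs.2)]
      rw [this.deriv_eq]
      have : HasDerivAt (fun s : ℝ => (1 - s) / (1 - υ)) ((-1) / (1 - υ)) t :=
        ((hasDerivAt_id t).const_sub 1).div_const _
      rw [this.deriv]
      rw [abs_div, abs_of_pos h1υ]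
      simp
    · subst h2
      by_cases hdiff : DifferentiableAt ℝ (cutoff υ) 1
      · have h1 : HasDerivWithinAt (cutoff υ) 0 (Ici (1:ℝ)) 1 :=
          (hasDerivWithinAt_const (1:ℝ) (Ici (1:ℝ)) (0:ℝ)).congr
            (fun y hy => cutoff_eq_zero hυ hy) (cutoff_eq_zero hυ le_rfl)
        have h2 := hdiff.hasDerivAt.hasDerivWithinAt (s := Ici (1:ℝ))
        have h4 := h1.derivWithin (uniqueDiffOn_Ici _ _ (Set.mem_Ici.2 le_rfl))
        have h3 := h2.derivWithin (uniqueDiffOn_Ici _ _ (Set.mem_Ici.2 le_rfl))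
        rw [← h3, h4]; rw [abs_zero]; exact hnn
      · rw [deriv_zero_of_not_differentiableAt hdiff]; rw [abs_zero]; exact hnn
    · rw [deriv_cutoff_of_gt hυ h2]; rw [abs_zero]; exact hnn




-- continuity from Hölder bound
lemma continuousOn_of_holder {d : ℕ} {s : Set (Euc d)} {f : Euc d → Euc d} {M α : ℝ}
    (hα : 0 < α) (hM : 0 ≤ M)
    (h : ∀ x ∈ s, ∀ y ∈ s, ‖f x - f y‖ ≤ M * ‖x - y‖ ^ α) : ContinuousOn f s := by
  intro x hx
  rw [Metric.continuousWithinAt_iff]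
  intro ε hε
  refine ⟨(ε / (M + 1)) ^ α⁻¹, Real.rpow_pos_of_pos (by positivity) _, fun {y} hy hdy => ?_⟩
  have h1 : dist (f y) (f x) ≤ M * ‖y - x‖ ^ α := by
    rw [dist_eq_norm]; exact h y hy x hx
  have h2 : ‖y - x‖ ^ α < ((ε / (M + 1)) ^ α⁻¹) ^ α := by
    apply Real.rpow_lt_rpow (norm_nonneg _) _ hα
    rwa [dist_eq_norm] at hdy
  rw [Real.rpow_inv_rpow (by positivity) hα.ne'] at h2
  calc dist (f y) (f x) ≤ M * ‖y - x‖ ^ α := h1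
    _ ≤ M * (ε / (M + 1)) := by
        apply mul_le_mul_of_nonneg_left h2.le hM
    _ < ε := by
        rw [mul_div_assoc']
        rw [div_lt_iff₀ (by positivity)]
        nlinarith
/-- **Height derivative identity** (Lemma 3.1, eq. (3.10)): for a local minimizer `u`
satisfying Assumption A on a ball containing the closed unit ball, for every `r ∈ (0,1)`
one has `H'(r) - ((d-1)/r) H(r) - (2/r) B(r) = 0`. -/
theorem height_derivative_identity {d : ℕ} (hd : 2 ≤ d)
    (υ : ℝ) (hυ : υ ∈ Set.Ioo (1 / 2 : ℝ) 1)
    (c₀ : Euc d) (R : ℝ) (hR : 0 < R) (hB : closedBall (0 : Euc d) 1 ⊆ ball c₀ R)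
    (F : Euc d → ℝ → Euc d → ℝ) (γ C : ℝ) (U : Set (Euc d × ℝ × Euc d))
    (hF : NLHyp d F γ C U) (q : ℝ) (hq : 2 ≤ q) (u : Euc d → ℝ)
    (hu : IsMinimizer (ball c₀ R) q (fun x s p => ‖p‖ ^ 2 / 2 + F x s p) u)
    (α δ₀ : ℝ) (hA : AssumptionA (ball c₀ R) u α δ₀) :
    ∀ r ∈ Set.Ioo (0 : ℝ) 1,
      deriv (Hh υ u) r - ((d : ℝ) - 1) / r * Hh υ u r - 2 / r * Bb υ u r = 0 := by
  classical
  obtain ⟨hα, hα1, hδ₀, hδ₀1, ⟨δ, hδ0, hδδ₀, hudiff, hub, hgb, hgh⟩, -⟩ := hA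
  intro r₀ hr₀
  obtain ⟨hr0, hr1⟩ := hr₀
  have h1υ : (0:ℝ) < 1 - υ := by linarith [hυ.2]
  set g : ℝ → ℝ := deriv (cutoff υ) with hgdef
  set k : Euc d → ℝ := fun y => g ‖y‖ / ‖y‖ with hkdef
  set S : Set (Euc d) := closedBall (0:Euc d) 1 with hSdef
  have hSB : S ⊆ ball c₀ R := hB
  have hmemS : ∀ {r : ℝ}, |r| ≤ 1 → ∀ {y : Euc d}, ‖y‖ ≤ 1 → r • y ∈ S := by
    intro r hr y hy
    rw [hSdef, mem_closedBall_zero_iff, norm_smul, Real.norm_eq_abs]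
    calc |r| * ‖y‖ ≤ 1 * 1 := by
          apply mul_le_mul hr hy (norm_nonneg _) zero_le_one
      _ = 1 := one_mul 1
  have hk0 : ∀ y : Euc d, 1 < ‖y‖ → k y = 0 := by
    intro y hy
    simp [hkdef, hgdef, deriv_cutoff_of_gt hυ hy]
  have hkbd : ∀ y : Euc d, |k y| ≤ 1 / (1 - υ) ^ 2 := by
    intro y
    rcases lt_or_ge ‖y‖ (1 - υ) with h | h
    · have : g ‖y‖ = 0 := deriv_cutoff_of_lt hυ h
      simp [hkdef, this]
      positivity
    · have hy0 : (0:ℝ) < ‖y‖ := lt_of_lt_of_le h1υ h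
      rw [hkdef]
      rw [abs_div, abs_of_pos hy0]
      calc |g ‖y‖| / ‖y‖ ≤ (1 / (1 - υ)) / (1 - υ) := by
            apply div_le_div₀ (by positivity) (deriv_cutoff_bound hυ _) h1υ h
        _ = 1 / (1 - υ) ^ 2 := by rw [div_div, sq]
  have hkmeas : Measurable k := by
    apply Measurable.div
    · exact (measurable_deriv (cutoff υ)).comp measurable_norm
    · exact measurable_norm
  -- continuity of u and gradient u on S
  have hcu : ContinuousOn u S :=
    fun x hx => ((hudiff x (hSB hx)).continuousAt).continuousWithinAt
  have hcg : ContinuousOn (gradient u) S :=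
    (continuousOn_of_holder hα hδ0.le hgh).mono hSB
  -- pointwise identities turning integrands into measurable combinations
  have hindmem : ∀ {y : Euc d}, ‖y‖ ≤ 1 → y ∈ S := fun hy => mem_closedBall_zero_iff.2 hy
  have hSmeas : MeasurableSet S := measurableSet_closedBall
  have hmaps : ∀ {r : ℝ}, |r| ≤ 1 → MapsTo (fun y : Euc d => r • y) S S := by
    intro r hr y hy
    exact hmemS hr (mem_closedBall_zero_iff.1 hy)
  have haesm_u : ∀ {r : ℝ}, |r| ≤ 1 →
      AEStronglyMeasurable (S.indicator fun y => u (r • y)) (volume : Measure (Euc d)) := by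
    intro r hr
    refine (aestronglyMeasurable_indicator_iff hSmeas).2 ?_
    exact ((hcu.comp (continuous_const_smul r).continuousOn (hmaps hr)).aestronglyMeasurable hSmeas)
  have haesm_g : ∀ {r : ℝ}, |r| ≤ 1 →
      AEStronglyMeasurable (S.indicator fun y => gradient u (r • y)) (volume : Measure (Euc d)) := by
    intro r hr
    refine (aestronglyMeasurable_indicator_iff hSmeas).2 ?_
    exact ((hcg.comp (continuous_const_smul r).continuousOn (hmaps hr)).aestronglyMeasurable hSmeas)
  -- the two parametric integrands
  set Φ : ℝ → Euc d → ℝ := fun r y => k y * u (r • y) ^ 2 with hΦdef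
  set Φ' : ℝ → Euc d → ℝ :=
    fun r y => k y * (2 * u (r • y) * (inner ℝ (gradient u (r • y)) y : ℝ)) with hΦ'def
  have hky_le : ∀ {y : Euc d}, k y ≠ 0 → ‖y‖ ≤ 1 := by
    intro y hy
    by_contra h
    exact hy (hk0 y (not_le.1 h))
  have hΦmeas : ∀ {r : ℝ}, |r| ≤ 1 → AEStronglyMeasurable (Φ r) (volume : Measure (Euc d)) := by
    intro r hr
    have : Φ r = fun y => k y * (S.indicator (fun y => u (r • y)) y) ^ 2 := by
      funext y
      by_cases hy : y ∈ S
      · rw [indicator_of_mem hy]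
      · have : k y = 0 := by
          apply hk0
          by_contra h
          exact hy (hindmem (not_lt.1 h))
        simp [hΦdef, this]
    rw [this]
    exact (hkmeas.aestronglyMeasurable).mul ((haesm_u hr).pow 2)
  have hΦ'meas : ∀ {r : ℝ}, |r| ≤ 1 → AEStronglyMeasurable (Φ' r) (volume : Measure (Euc d)) := by
    intro r hr
    have : Φ' r = fun y => k y * (2 * (S.indicator (fun y => u (r • y)) y) *
        (inner ℝ (S.indicator (fun y => gradient u (r • y)) y) y : ℝ)) := by
      funext y
      by_cases hy : y ∈ S
      · rw [indicator_of_mem hy, indicator_of_mem hy]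
      · have : k y = 0 := by
          apply hk0
          by_contra h
          exact hy (hindmem (not_lt.1 h))
        simp [hΦ'def, this]
    rw [this]
    exact (hkmeas.aestronglyMeasurable).mul
      (((aestronglyMeasurable_const).mul (haesm_u hr)).mul
        ((haesm_g hr).inner aestronglyMeasurable_id))
  -- integrable bound
  have hkint : Integrable (fun y : Euc d => |k y|) := by
    apply Integrable.mono' (g := S.indicator fun _ => 1 / (1 - υ) ^ 2)
    · exact (integrableOn_const measure_closedBall_lt_top.ne).integrable_indicator hSmeas
    · exact hkmeas.abs.aestronglyMeasurable
    · apply ae_of_all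
      intro y
      rw [Real.norm_eq_abs, abs_abs]
      by_cases hy : y ∈ S
      · rw [indicator_of_mem hy]; exact hkbd y
      · rw [indicator_of_notMem hy]
        have : k y = 0 := by
          apply hk0; by_contra h; exact hy (hindmem (not_lt.1 h))
        simp [this]
  -- bounds on u, gradient u at points r • y
  have huval : ∀ {r : ℝ}, |r| ≤ 1 → ∀ {y : Euc d}, ‖y‖ ≤ 1 →
      |u (r • y)| ≤ δ ∧ ‖gradient u (r • y)‖ ≤ δ := by
    intro r hr y hy
    have hmem := hSB (hmemS hr hy)
    exact ⟨hub _ hmem, hgb _ hmem⟩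
  -- ε for dominated differentiation
  set ε : ℝ := min r₀ (1 - r₀) / 2 with hεdef
  have hεpos : 0 < ε := by
    apply div_pos _ two_pos
    exact lt_min hr0 (by linarith)
  have hball : Metric.ball r₀ ε ⊆ Set.Ioo (0:ℝ) 1 := by
    intro r hr
    rw [Metric.mem_ball, Real.dist_eq, abs_lt] at hr
    constructor <;>
      nlinarith [min_le_left r₀ (1 - r₀), min_le_right r₀ (1 - r₀), hr.1, hr.2]
  -- derivative of the integrand
  have hder : ∀ y : Euc d, ∀ r ∈ Metric.ball r₀ ε,
      HasDerivAt (fun r => Φ r y) (Φ' r y) r := by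
    intro y r hr
    by_cases hky : k y = 0
    · simp only [hΦdef, hΦ'def, hky, zero_mul]
      exact hasDerivAt_const r 0
    · have hy1 : ‖y‖ ≤ 1 := hky_le hky
      obtain ⟨hr0', hr1'⟩ := hball hr
      have hrabs : |r| ≤ 1 := by rw [abs_of_pos hr0']; exact hr1'.le
      have hmem := hSB (hmemS hrabs hy1)
      have hdu : DifferentiableAt ℝ u (r • y) := hudiff _ hmem
      have H1 : HasFDerivAt u (InnerProductSpace.toDual ℝ (Euc d) (gradient u (r • y))) (r • y) :=
        hdu.hasGradientAt.hasFDerivAt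
      have H2 : HasDerivAt (fun s : ℝ => s • y) y r := by
        simpa using (hasDerivAt_id r).smul_const y
      have H3 : HasDerivAt (fun s : ℝ => u (s • y))
          ((inner ℝ (gradient u (r • y)) y : ℝ)) r := by
        have := H1.comp_hasDerivAt r H2
        simpa [InnerProductSpace.toDual_apply_apply, Function.comp_def] using this
      have H4 := (H3.pow 2).const_mul (k y)
      convert H4 using 1
      · rfl
      · rfl
      · rfl
      · simp [hΦ'def]
  -- bound on Φ'
  have hbound : ∀ y : Euc d, ∀ r ∈ Metric.ball r₀ ε,
      ‖Φ' r y‖ ≤ 2 * δ ^ 2 * |k y| := by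
    intro y r hr
    by_cases hky : k y = 0
    · simp [hΦ'def, hky]
    · have hy1 : ‖y‖ ≤ 1 := hky_le hky
      obtain ⟨hr0', hr1'⟩ := hball hr
      have hrabs : |r| ≤ 1 := by rw [abs_of_pos hr0']; exact hr1'.le
      obtain ⟨hu1, hg1⟩ := huval hrabs hy1
      have hi : |(inner ℝ (gradient u (r • y)) y : ℝ)| ≤ δ := by
        calc |(inner ℝ (gradient u (r • y)) y : ℝ)| ≤ ‖gradient u (r • y)‖ * ‖y‖ :=
              abs_real_inner_le_norm _ _
          _ ≤ δ * 1 := mul_le_mul hg1 hy1 (norm_nonneg _) (le_trans (norm_nonneg _) hg1)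
          _ = δ := mul_one δ
      rw [hΦ'def, Real.norm_eq_abs]
      simp only
      rw [abs_mul, abs_mul, abs_mul, abs_two]
      calc |k y| * (2 * |u (r • y)| * |(inner ℝ (gradient u (r • y)) y : ℝ)|)
          ≤ |k y| * (2 * δ * δ) := by
            apply mul_le_mul_of_nonneg_left _ (abs_nonneg _)
            apply mul_le_mul _ hi (abs_nonneg _) (by positivity)
            apply mul_le_mul_of_nonneg_left hu1 (by norm_num)
        _ = 2 * δ ^ 2 * |k y| := by ring
  -- integrability of Φ r₀
  have hr₀abs : |r₀| ≤ 1 := by rw [abs_of_pos hr0]; exact hr1.le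
  have hΦint : Integrable (Φ r₀) := by
    apply Integrable.mono' (g := fun y => δ ^ 2 * |k y|) (hkint.const_mul _) (hΦmeas hr₀abs)
    apply ae_of_all
    intro y
    by_cases hky : k y = 0
    · simp [hΦdef, hky]
    · have hy1 : ‖y‖ ≤ 1 := hky_le hky
      obtain ⟨hu1, -⟩ := huval hr₀abs hy1
      rw [hΦdef, Real.norm_eq_abs]
      simp only
      rw [abs_mul, abs_pow]
      calc |k y| * |u (r₀ • y)| ^ 2 ≤ |k y| * δ ^ 2 := by
            apply mul_le_mul_of_nonneg_left _ (abs_nonneg _)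
            apply pow_le_pow_left₀ (abs_nonneg _) hu1
        _ = δ ^ 2 * |k y| := mul_comm _ _
  -- dominated differentiation
  obtain ⟨-, hH⟩ := hasDerivAt_integral_of_dominated_loc_of_deriv_le (ball_mem_nhds r₀ hεpos)
    (F := Φ) (F' := Φ') (bound := fun y => 2 * δ ^ 2 * |k y|)
    (by
      filter_upwards [Ioo_mem_nhds hr0 hr1] with r hr
      exact hΦmeas (by rw [abs_of_pos hr.1]; exact hr.2.le))
    hΦint (hΦ'meas hr₀abs)
    (ae_of_all _ fun y r hr => hbound y r hr)
    (hkint.const_mul _)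
    (ae_of_all _ fun y r hr => hder y r hr)
  -- substitution lemma
  have hsub : ∀ (f : Euc d → ℝ) (r : ℝ), 0 < r → ∫ x, f x = r ^ d * ∫ y, f (r • y) := by
    intro f r hr
    have h := MeasureTheory.Measure.integral_comp_smul (volume : Measure (Euc d)) f r
    rw [finrank_euclideanSpace_fin] at h
    rw [h, abs_of_pos (by positivity), smul_eq_mul, ← mul_assoc,
      mul_inv_cancel₀ (by positivity), one_mul]
  -- rewrite Hh
  have hHr : ∀ r : ℝ, 0 < r → Hh υ u r = -(r ^ (d - 1) * ∫ y, Φ r y) := by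
    intro r hr
    rw [Hh, hsub _ r hr]
    have hpt : ∀ y : Euc d, deriv (cutoff υ) (‖r • y‖ / r) * u (r • y) ^ 2 / ‖r • y‖
        = Φ r y / r := by
      intro y
      rw [norm_smul, Real.norm_eq_abs, abs_of_pos hr, mul_div_cancel_left₀ _ hr.ne']
      rw [hΦdef]
      simp only
      rw [hkdef]
      simp only [← hgdef]
      rw [div_eq_mul_inv, div_eq_mul_inv, div_eq_mul_inv, mul_inv]
      ring
    rw [integral_congr_ae (ae_of_all _ hpt), integral_div]
    have hpow : r ^ d = r ^ (d - 1) * r := by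
      rw [← pow_succ]
      congr 1
      omega
    rw [hpow]
    field_simp
  -- rewrite Bb
  have hBr : Bb υ u r₀ = -(r₀ ^ d *
      ∫ y, k y * u (r₀ • y) * (inner ℝ (gradient u (r₀ • y)) y : ℝ)) := by
    rw [Bb, hsub _ r₀ hr0]
    have hpt : ∀ y : Euc d, deriv (cutoff υ) (‖r₀ • y‖ / r₀) * u (r₀ • y) *
        ((inner ℝ (gradient u (r₀ • y)) (r₀ • y) : ℝ) / ‖r₀ • y‖)
        = k y * u (r₀ • y) * (inner ℝ (gradient u (r₀ • y)) y : ℝ) := by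
      intro y
      rw [norm_smul, Real.norm_eq_abs, abs_of_pos hr0, mul_div_cancel_left₀ _ hr0.ne']
      rw [real_inner_smul_right, mul_div_mul_left _ _ hr0.ne']
      rw [hkdef]
      simp only [← hgdef]
      rw [div_eq_mul_inv, div_eq_mul_inv]
      ring
    rw [integral_congr_ae (ae_of_all _ hpt)]
  -- ∫ Φ' r₀ = 2 * b
  have hintΦ' : (∫ y, Φ' r₀ y) =
      2 * ∫ y, k y * u (r₀ • y) * (inner ℝ (gradient u (r₀ • y)) y : ℝ) := by
    rw [← integral_const_mul]
    apply integral_congr_ae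
    apply ae_of_all
    intro y
    show Φ' r₀ y = 2 * (k y * u (r₀ • y) * (inner ℝ (gradient u (r₀ • y)) y : ℝ))
    rw [hΦ'def]
    ring
  set b : ℝ := ∫ y, k y * u (r₀ • y) * (inner ℝ (gradient u (r₀ • y)) y : ℝ) with hbdef
  rw [hintΦ'] at hH
  -- derivative of Hh via eventual equality
  obtain ⟨n, rfl⟩ : ∃ n, d = n + 2 := ⟨d - 2, by omega⟩
  have hP : HasDerivAt (fun r => -(r ^ (n + 2 - 1) * ∫ y, Φ r y))
      (-((↑(n + 2 - 1) * r₀ ^ (n + 2 - 1 - 1)) * (∫ y, Φ r₀ y) +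
        r₀ ^ (n + 2 - 1) * (2 * b))) r₀ :=
    ((hasDerivAt_pow (n + 2 - 1) r₀).mul hH).neg
  have heq : Hh υ u =ᶠ[𝓝 r₀] fun r => -(r ^ (n + 2 - 1) * ∫ y, Φ r y) := by
    filter_upwards [Ioi_mem_nhds hr0] with r hr using hHr r hr
  rw [heq.deriv_eq, hP.deriv, hHr r₀ hr0, hBr]
  push_cast
  have hr₀ne : r₀ ≠ 0 := hr0.ne'
  field_simp
  ring
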